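/- arXiv:math/0405238 — 2 statements merged into one kernel-verified Lean document; each statement's English description precedes it below -/
import Mathlib

section
/- Let $X$ be a finitely generated abelian group, $k$ a field, and let $M = \bigoplus_{\lambda \in X} M_\lambda$ be an $X$-graded module over an $X$-graded commutative $k$-algebra $R$. If $M$ is a noetherian $R$-module, then for any subgroup $Y \subseteq X$, the component $M_Y := \bigoplus_{\lambda \in Y} M_\lambda$ is a noetherian module over the subring $R_Y := \bigoplus_{\lambda \in Y} R_\lambda$. -/
set_option synthInstance.maxHeartbeats 400000
set_option maxHeartbeats 800000

namespace GradedPartNoeth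

open DirectSum

section Proj

variable {X A : Type*} [AddCommGroup X] [DecidableEq X] [AddCommGroup A]
variable (𝒜 : X → AddSubgroup A) [DirectSum.Decomposition 𝒜]
variable (Y : AddSubgroup X) [DecidablePred (· ∈ Y)]

/-- Projection onto the part graded by degrees in `Y`. -/
noncomputable def proj : A →+ A :=
  (DirectSum.coeAddMonoidHom 𝒜).comp
    ((DFinsupp.filterAddMonoidHom (fun i => 𝒜 i) (· ∈ Y)).comp
      (DirectSum.decomposeAddEquiv 𝒜).toAddMonoidHom)

theorem proj_of_mem {i : X} {x : A} (hx : x ∈ 𝒜 i) :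
    proj 𝒜 Y x = if i ∈ Y then x else 0 := by
  have key : proj 𝒜 Y x
      = DirectSum.coeAddMonoidHom 𝒜 (DFinsupp.filter (· ∈ Y) (DirectSum.decompose 𝒜 x)) := rfl
  rw [key, DirectSum.decompose_of_mem 𝒜 hx,
    show (DirectSum.of (fun i => 𝒜 i) i ⟨x, hx⟩ : ⨁ i, 𝒜 i) = DFinsupp.single i ⟨x, hx⟩ from rfl,
    DFinsupp.filter_single]
  split_ifs with hi
  · exact DirectSum.coeAddMonoidHom_of 𝒜 i ⟨x, hx⟩
  · exact map_zero _

theorem proj_mem (x : A) : proj 𝒜 Y x ∈ ⨆ (i : X) (_ : i ∈ Y), 𝒜 i := by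
  classical
  rw [← DirectSum.sum_support_decompose 𝒜 x, map_sum]
  refine AddSubgroup.sum_mem _ fun i _ => ?_
  rw [proj_of_mem 𝒜 Y (SetLike.coe_mem _)]
  split_ifs with h
  · exact le_iSup₂ (f := fun (i : X) (_ : i ∈ Y) => 𝒜 i) i h (SetLike.coe_mem _)
  · exact zero_mem _

theorem proj_eq_self {x : A} (hx : x ∈ ⨆ (i : X) (_ : i ∈ Y), 𝒜 i) : proj 𝒜 Y x = x := by
  rw [iSup_subtype'] at hx
  refine AddSubgroup.iSup_induction (C := fun a => proj 𝒜 Y a = a) _ hx (fun i x hxi => ?_) (map_zero _) ?_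
  · show proj 𝒜 Y x = x
    rw [proj_of_mem 𝒜 Y hxi, if_pos i.2]
  · intro a b ha hb
    show proj 𝒜 Y (a + b) = a + b
    rw [map_add, ha, hb]

end Proj

section SMul

variable {X R M : Type*} [AddCommGroup X] [DecidableEq X]
  [CommRing R] [AddCommGroup M] [Module R M]
variable (𝒜 : X → AddSubgroup R) [GradedRing 𝒜]
variable (ℳ : X → AddSubgroup M) [DirectSum.Decomposition ℳ] [SetLike.GradedSMul 𝒜 ℳ]
variable (Y : AddSubgroup X) [DecidablePred (· ∈ Y)]

theorem proj_smul (r : R) {m : M} (hm : m ∈ ⨆ (i : X) (_ : i ∈ Y), ℳ i) :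
    proj ℳ Y (r • m) = proj 𝒜 Y r • m := by
  classical
  rw [iSup_subtype'] at hm
  refine AddSubgroup.iSup_induction (C := fun a => proj ℳ Y (r • a) = proj 𝒜 Y r • a) _ hm (fun i m hmi => ?_) (by simp) ?_
  · show proj ℳ Y (r • m) = proj 𝒜 Y r • m
    conv_lhs => rw [← DirectSum.sum_support_decompose 𝒜 r, Finset.sum_smul, map_sum]
    conv_rhs => rw [← DirectSum.sum_support_decompose 𝒜 r, map_sum, Finset.sum_smul]
    refine Finset.sum_congr rfl fun lam _ => ?_
    have h1' := SetLike.GradedSMul.smul_mem (A := 𝒜) (B := ℳ)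
      (SetLike.coe_mem (DirectSum.decompose 𝒜 r lam)) hmi
    rw [vadd_eq_add] at h1'
    have h1 : (DirectSum.decompose 𝒜 r lam : R) • m ∈ ℳ (lam + ↑i) := h1'
    rw [proj_of_mem ℳ Y h1, proj_of_mem 𝒜 Y (SetLike.coe_mem _), ite_smul, zero_smul]
    have hiff : lam + ↑i ∈ Y ↔ lam ∈ Y := by
      constructor
      · intro h; simpa using Y.sub_mem h i.2
      · intro h; exact Y.add_mem h i.2
    simp only [hiff]
  · intro a b ha hb
    show proj ℳ Y (r • (a + b)) = proj 𝒜 Y r • (a + b)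
    rw [smul_add, map_add, ha, hb, smul_add]

end SMul

end GradedPartNoeth

/-- Let `R` be a commutative `k`-algebra graded by a finitely generated abelian group `X`
and `M` an `X`-graded `R`-module which is noetherian. Then for any subgroup `Y ≤ X`, the
part `M_Y = ⊕_{λ ∈ Y} M_λ` is a noetherian module over `R_Y = ⊕_{λ ∈ Y} R_λ`, i.e. every
ascending chain of `R_Y`-stable subgroups of `M_Y` stabilizes. -/
theorem graded_part_noetherian
    (k X R M : Type*) [Field k] [AddCommGroup X] [DecidableEq X] [AddGroup.FG X]
    [CommRing R] [Algebra k R] [AddCommGroup M] [Module R M]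
    (𝒜 : X → AddSubgroup R) [GradedRing 𝒜]
    (ℳ : X → AddSubgroup M) [DirectSum.Decomposition ℳ] [SetLike.GradedSMul 𝒜 ℳ]
    [IsNoetherian R M] (Y : AddSubgroup X) :
    ∀ f : ℕ → AddSubgroup M,
      (∀ n, f n ≤ ⨆ (lam : X) (_ : lam ∈ Y), ℳ lam) →
      (∀ n, f n ≤ f (n + 1)) →
      (∀ n, ∀ r ∈ (⨆ (lam : X) (_ : lam ∈ Y), 𝒜 lam : AddSubgroup R),
        ∀ m ∈ f n, r • m ∈ f n) →
      ∃ N, ∀ n ≥ N, f n = f N := by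
  classical
  intro f hfY hmono hstab
  have hf : Monotone f := monotone_nat_of_le_succ hmono
  set g : ℕ →o Submodule R M :=
    ⟨fun n => Submodule.span R (f n : Set M),
      fun a b hab => Submodule.span_mono (fun x hx => hf hab hx)⟩ with hg
  obtain ⟨N, hN⟩ := monotone_stabilizes_iff_noetherian.mpr ‹IsNoetherian R M› g
  refine ⟨N, fun n hn => ?_⟩
  have key : ∀ p : ℕ, ∀ x ∈ g p, GradedPartNoeth.proj ℳ Y x ∈ f p := by
    intro p x hx
    obtain ⟨c, hc, rfl⟩ := Submodule.mem_span_set.mp hx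
    rw [Finsupp.sum, map_sum]
    refine AddSubgroup.sum_mem _ fun m hm => ?_
    have hmf : m ∈ f p := hc hm
    rw [GradedPartNoeth.proj_smul 𝒜 ℳ Y (c m) (hfY p hmf)]
    exact hstab p _ (GradedPartNoeth.proj_mem 𝒜 Y (c m)) m hmf
  refine le_antisymm ?_ (hf hn)
  intro x hx
  have hxg : x ∈ g N := by
    rw [hN n hn]
    exact Submodule.subset_span hx
  have := key N x hxg
  rwa [GradedPartNoeth.proj_eq_self ℳ Y (hfY n hx)] at this
end

section
/- Let $A$ be a commutative ring with an exhaustive filtration by additive subgroups $A_{\leq 0} \subseteq A_{\leq 1} \subseteq \cdots$ with $A = \bigcup_i A_{\leq i}$ and $A_{\leq i} A_{\leq j} \subseteq A_{\leq i+j}$, and let $M$ be an $A$-module with a compatible filtration $M_{\leq 0} \subseteq M_{\leq 1} \subseteq \cdots$, $M = \bigcup_i M_{\leq i}$, $A_{\leq i} M_{\leq j} \subseteq M_{\leq i+j}$. If the associated graded module $\operatorname{gr} M = \bigoplus_i M_{\leq i}/M_{\leq i-1}$ is a noetherian $\operatorname{gr} A$-module, then $M$ is a noetherian $A$-module. -/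
set_option synthInstance.maxHeartbeats 1000000
set_option maxHeartbeats 1000000


/-- Let `A` be a commutative ring with an exhaustive multiplicative filtration
`FA 0 ⊆ FA 1 ⊆ ⋯` and `M` an `A`-module with a compatible exhaustive filtration `FM`.
Let `GA` (with grading `𝒜`) and `GM` (with grading `ℳ`) be realizations of the
associated graded ring and module, given by additive maps `φ i : FA i → GA` and
`ψ i : FM i → GM` onto the graded pieces whose kernels are the previous filtration
steps and which are compatible with multiplication and the module structure.
If `GM` is a noetherian `GA`-module, then `M` is a noetherian `A`-module. -/
theorem noetherian_of_grading_noetherian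
    (A M : Type*) [CommRing A] [AddCommGroup M] [Module A M]
    (FA : ℕ → AddSubgroup A) (FM : ℕ → AddSubgroup M)
    (hFAmono : Monotone FA) (hFAex : (⨆ i, FA i) = ⊤) (hFA1 : (1 : A) ∈ FA 0)
    (hFAmul : ∀ {i j : ℕ} {a b : A}, a ∈ FA i → b ∈ FA j → a * b ∈ FA (i + j))
    (hFMmono : Monotone FM) (hFMex : (⨆ i, FM i) = ⊤)
    (hFAM : ∀ {i j : ℕ} {a : A} {m : M}, a ∈ FA i → m ∈ FM j → a • m ∈ FM (i + j))
    (GA GM : Type*) [Ring GA] [AddCommGroup GM] [Module GA GM]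
    (𝒜 : ℕ → AddSubgroup GA) [GradedRing 𝒜]
    (ℳ : ℕ → AddSubgroup GM) [DirectSum.Decomposition ℳ] [SetLike.GradedSMul 𝒜 ℳ]
    (φ : ∀ i : ℕ, (FA i) →+ GA) (ψ : ∀ i : ℕ, (FM i) →+ GM)
    (hφrange : ∀ i, (φ i).range = 𝒜 i)
    (hφker0 : ∀ a : FA 0, φ 0 a = 0 ↔ (a : A) = 0)
    (hφker : ∀ (i : ℕ) (a : FA (i + 1)), φ (i + 1) a = 0 ↔ (a : A) ∈ FA i)
    (hφmul : ∀ (i j : ℕ) (a : FA i) (b : FA j),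
      φ (i + j) ⟨(a : A) * (b : A), hFAmul a.2 b.2⟩ = φ i a * φ j b)
    (hψrange : ∀ i, (ψ i).range = ℳ i)
    (hψker0 : ∀ m : FM 0, ψ 0 m = 0 ↔ (m : M) = 0)
    (hψker : ∀ (i : ℕ) (m : FM (i + 1)), ψ (i + 1) m = 0 ↔ (m : M) ∈ FM i)
    (hψsmul : ∀ (i j : ℕ) (a : FA i) (m : FM j),
      ψ (i + j) ⟨(a : A) • (m : M), hFAM a.2 m.2⟩ = φ i a • ψ j m)
    (hnoeth : IsNoetherian GA GM) :
    IsNoetherian A M := by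
  classical
  -- the projection onto the `i`-th graded piece of `GM`, as an additive map
  let π : ℕ → GM →+ GM := fun i =>
    AddMonoidHom.mk' (fun x => ((DirectSum.decompose ℳ x) i : GM)) (by
      intro x y; simp [map_add, DirectSum.add_apply])
  have hπ_same : ∀ (i : ℕ) (x : GM), x ∈ ℳ i → π i x = x := fun i x hx =>
    DirectSum.decompose_of_mem_same ℳ hx
  have hπ_ne : ∀ (i j : ℕ) (x : GM), x ∈ ℳ j → j ≠ i → π i x = 0 := fun i j x hx hne =>
    DirectSum.decompose_of_mem_ne ℳ hx hne
  -- the `i`-th graded piece of the associated graded of a submodule `N`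
  let T : Submodule A M → ℕ → AddSubgroup GM := fun N i =>
    { carrier := { g | ∃ m : FM i, (m : M) ∈ N ∧ ψ i m = g }
      add_mem' := by
        rintro x y ⟨m, hm, rfl⟩ ⟨m', hm', rfl⟩
        exact ⟨m + m', N.add_mem hm hm', map_add _ _ _⟩
      zero_mem' := ⟨0, N.zero_mem, map_zero _⟩
      neg_mem' := by
        rintro x ⟨m, hm, rfl⟩
        exact ⟨-m, N.neg_mem hm, map_neg _ _⟩ }
  have hT_le : ∀ (N : Submodule A M) (i : ℕ), T N i ≤ ℳ i := by
    rintro N i x ⟨m, hm, rfl⟩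
    rw [← hψrange]
    exact ⟨m, rfl⟩
  have hT_mono : ∀ {N N' : Submodule A M}, N ≤ N' → ∀ i, T N i ≤ T N' i := by
    rintro N N' h i x ⟨m, hm, rfl⟩
    exact ⟨m, h hm, rfl⟩
  -- homogeneous elements of `GA` act on the associated graded
  have hsmul_T : ∀ (N : Submodule A M) (j : ℕ) (a : FA j) (x : GM),
      x ∈ (⨆ i, T N i : AddSubgroup GM) → φ j a • x ∈ (⨆ i, T N i : AddSubgroup GM) := by
    intro N j a x hx
    refine AddSubgroup.iSup_induction (C := fun y => φ j a • y ∈ (⨆ i, T N i : AddSubgroup GM))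
      (T N) hx (fun i y hy => ?_) ?_ (fun y z hy hz => ?_)
    · obtain ⟨m, hm, rfl⟩ := hy
      refine AddSubgroup.mem_iSup_of_mem (j + i) ⟨⟨(a : A) • (m : M), hFAM a.2 m.2⟩,
        N.smul_mem _ hm, hψsmul j i a m⟩
    · show φ j a • (0 : GM) ∈ _
      rw [smul_zero]; exact zero_mem _
    · show φ j a • (y + z) ∈ _
      rw [smul_add]; exact add_mem hy hz
  -- the associated graded submodule
  let Gr : Submodule A M → Submodule GA GM := fun N =>
    { carrier := (⨆ i, T N i : AddSubgroup GM)
      add_mem' := fun hx hy => add_mem hx hy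
      zero_mem' := zero_mem _
      smul_mem' := by
        intro g x hx
        have hgx : g • x =
            ∑ j ∈ (DirectSum.decompose 𝒜 g).support, ((DirectSum.decompose 𝒜 g j : 𝒜 j) : GA) • x := by
          rw [← Finset.sum_smul, DirectSum.sum_support_decompose 𝒜 g]
        rw [hgx]
        refine sum_mem (fun j hj => ?_)
        have hmem : ((DirectSum.decompose 𝒜 g j : 𝒜 j) : GA) ∈ (φ j).range := by
          rw [hφrange]; exact SetLike.coe_mem _
        obtain ⟨a, ha⟩ := hmem
        rw [← ha]
        exact hsmul_T N j a x hx }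
  have hGr_mono : Monotone Gr := by
    intro N N' h x hx
    refine AddSubgroup.iSup_induction (C := fun y => y ∈ (Gr N' : Submodule GA GM))
      (T N) hx (fun i y hy => ?_) (zero_mem _) (fun y z hy hz => add_mem hy hz)
    exact AddSubgroup.mem_iSup_of_mem i (hT_mono h i hy)
  -- extraction: a homogeneous element of `Gr N` of degree `i` comes from `T N i`
  have hextract : ∀ (N : Submodule A M) (i : ℕ) (x : GM), x ∈ ℳ i →
      x ∈ Gr N → x ∈ T N i := by
    intro N i x hxi hx
    have key : π i x ∈ T N i := by
      refine AddSubgroup.iSup_induction (C := fun y => π i y ∈ T N i)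
        (T N) hx (fun j y hy => ?_) ?_ (fun y z hy hz => ?_)
      · show π i y ∈ T N i
        by_cases hji : j = i
        · subst hji; rw [hπ_same j y (hT_le N j hy)]; exact hy
        · rw [hπ_ne i j y (hT_le N j hy) hji]; exact zero_mem _
      · show π i (0 : GM) ∈ T N i
        rw [map_zero]; exact zero_mem _
      · show π i (y + z) ∈ T N i
        rw [map_add]; exact add_mem hy hz
    rwa [hπ_same i x hxi] at key
  -- key lemma: if `N ≤ N'` and `Gr N' ≤ Gr N`, then `N' ≤ N`.
  have hkey : ∀ {N N' : Submodule A M}, N ≤ N' → Gr N' ≤ Gr N → N' ≤ N := by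
    intro N N' hle hgr m hm
    have hexh : ∃ i, m ∈ FM i := by
      have : m ∈ (⨆ i, FM i : AddSubgroup M) := hFMex ▸ AddSubgroup.mem_top m
      exact (AddSubgroup.mem_iSup_of_directed (hFMmono.directed_le)).mp this
    obtain ⟨i, hi⟩ := hexh
    induction i generalizing m with
    | zero =>
      have h1 : ψ 0 ⟨m, hi⟩ ∈ Gr N' := AddSubgroup.mem_iSup_of_mem 0 ⟨⟨m, hi⟩, hm, rfl⟩
      have h2 : ψ 0 ⟨m, hi⟩ ∈ ℳ 0 := by rw [← hψrange]; exact ⟨_, rfl⟩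
      obtain ⟨m', hm', hψm'⟩ := hextract N 0 _ h2 (hgr h1)
      have : ψ 0 (⟨m, hi⟩ - m') = 0 := by rw [map_sub, hψm', sub_self]
      have heq : m - (m' : M) = 0 := hψker0 _ |>.mp this
      rw [sub_eq_zero.mp heq]; exact hm'
    | succ i ih =>
      have h1 : ψ (i+1) ⟨m, hi⟩ ∈ Gr N' := AddSubgroup.mem_iSup_of_mem (i+1) ⟨⟨m, hi⟩, hm, rfl⟩
      have h2 : ψ (i+1) ⟨m, hi⟩ ∈ ℳ (i+1) := by rw [← hψrange]; exact ⟨_, rfl⟩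
      obtain ⟨m', hm', hψm'⟩ := hextract N (i+1) _ h2 (hgr h1)
      have hz : ψ (i+1) (⟨m, hi⟩ - m') = 0 := by rw [map_sub, hψm', sub_self]
      have hdown : (m - (m' : M)) ∈ FM i := hψker i _ |>.mp hz
      have hsub : (m - (m' : M)) ∈ N := ih (N'.sub_mem hm (hle hm')) hdown
      have heq : m = (m - (m' : M)) + (m' : M) := by abel
      rw [heq]; exact N.add_mem hsub hm'
  -- conclude via stabilization of monotone chains
  rw [← monotone_stabilizes_iff_noetherian]
  intro f
  obtain ⟨n, hn⟩ := monotone_stabilizes_iff_noetherian.mpr hnoeth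
    ⟨fun k => Gr (f k), fun a b h => hGr_mono (f.monotone h)⟩
  refine ⟨n, fun m hm => ?_⟩
  have h1 : f n ≤ f m := f.monotone hm
  have h2 : Gr (f m) ≤ Gr (f n) := le_of_eq (hn m hm).symm
  exact le_antisymm h1 (hkey h1 h2)
end
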